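/- Let (V,d) be a finite tree metric space, let r₁ < r₂ < … be the distinct positive pairwise distance values, and let e be an edge of the Vietoris–Rips complex VR_{r_m}(V) with diam e = r_m. Then e is contained in a unique maximal simplex Δ_e of VR_{r_m}(V) with diam Δ_e = r_m, namely the simplex spanned by B(x,r_m) ∩ B(y,r_m) where e = {x,y}. If e is a tree edge of length r_m, then Δ_e = e; if e is not a tree edge, then e is a proper face of Δ_e. -/
import Mathlib

open SimpleGraph

section Aux

variable {V : Type*} [MetricSpace V] [DecidableEq V] {G : SimpleGraph V} {l : Sym2 V → ℝ}

lemma isPath_append_aux {u v w : V} {p : G.Walk u v} {q : G.Walk v w}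
    (hp : p.IsPath) (hq : q.IsPath) (h : ∀ z, z ∈ p.support → z ∈ q.support → z = v) :
    (p.append q).IsPath := by
  rw [Walk.isPath_def, Walk.support_append]
  refine List.Nodup.append ((Walk.isPath_def p).mp hp) (((Walk.isPath_def q).mp hq).tail) ?_
  intro z hz1 hz2
  have hnd := (Walk.isPath_def q).mp hq
  rw [q.support_eq_cons] at hnd
  have hvq : v ∉ q.support.tail := (List.nodup_cons.mp hnd).1
  have hzq : z ∈ q.support := by
    rw [q.support_eq_cons]; exact List.mem_cons_of_mem _ hz2
  exact hvq (h z hz1 hzq ▸ hz2)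

lemma dist_split (hd : ∀ (x y : V) (p : G.Walk x y), p.IsPath → dist x y = (p.edges.map l).sum)
    {a b c : V} (p : G.Walk a b) (hp : p.IsPath) (hc : c ∈ p.support) :
    dist a b = dist a c + dist c b := by
  have h1 := hd a c (p.takeUntil c hc) (hp.takeUntil hc)
  have h2 := hd c b (p.dropUntil c hc) (hp.dropUntil hc)
  have h3 := hd a b p hp
  rw [← p.take_spec hc, Walk.edges_append, List.map_append, List.sum_append] at h3
  rw [h3, ← h1, ← h2]

lemma median (hT : G.IsTree)
    (hd : ∀ (x y : V) (p : G.Walk x y), p.IsPath → dist x y = (p.edges.map l).sum) :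
    ∀ {x u : V} (q : G.Walk x u), q.IsPath →
    ∀ {y : V} (p : G.Walk x y), p.IsPath →
    ∃ m ∈ p.support, dist x y = dist x m + dist m y ∧
      dist x u = dist x m + dist m u ∧ dist y u = dist y m + dist m u := by
  intro x u q
  induction q with
  | nil =>
    intro _ y p hp
    exact ⟨_, p.start_mem_support, by simp, by simp, by simp⟩
  | @cons x b u h q' ih =>
    intro hq y p hp
    cases p with
    | nil => exact ⟨x, Walk.start_mem_support _, by simp, by simp, by simp⟩
    | @cons _ a _ h₁ p₁ =>
      by_cases hab : a = b
      · subst hab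
        obtain ⟨m, hm, e1, e2, e3⟩ := ih hq.of_cons p₁ hp.of_cons
        have s1 : dist x y = dist x a + dist a y :=
          dist_split hd (Walk.cons h₁ p₁) hp (by simp)
        have s2 : dist x u = dist x a + dist a u :=
          dist_split hd (Walk.cons h q') hq (by simp)
        have t1 : dist x m ≤ dist x a + dist a m := dist_triangle x a m
        have t2 : dist x y ≤ dist x m + dist m y := dist_triangle x m y
        have hxm : dist x m = dist x a + dist a m := by linarith
        refine ⟨m, ?_, by linarith, by linarith, e3⟩
        rw [Walk.support_cons]; exact List.mem_cons_of_mem _ hm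
      · have hxp₁ : x ∉ p₁.support := ((Walk.cons_isPath_iff _ _).mp hp).2
        have hxq' : x ∉ q'.support := ((Walk.cons_isPath_iff _ _).mp hq).2
        have key : ∀ z, z ∈ (Walk.cons h₁ p₁).reverse.support →
            z ∈ (Walk.cons h q').support → z = x := by
          intro z hz1 hz2
          rw [Walk.support_reverse, List.mem_reverse] at hz1
          by_contra hzx
          rw [Walk.support_cons, List.mem_cons] at hz1 hz2
          have hz1' : z ∈ p₁.support := hz1.resolve_left hzx
          have hz2' : z ∈ q'.support := hz2.resolve_left hzx
          have ht₁ : (Walk.cons h₁ (p₁.takeUntil z hz1')).IsPath :=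
            (hp.of_cons.takeUntil hz1').cons
              (fun hmem => hxp₁ (p₁.support_takeUntil_subset hz1' hmem))
          have ht₂ : (Walk.cons h (q'.takeUntil z hz2')).IsPath :=
            (hq.of_cons.takeUntil hz2').cons
              (fun hmem => hxq' (q'.support_takeUntil_subset hz2' hmem))
          have heq := (hT.existsUnique_path x z).unique ht₁ ht₂
          have hgv : (Walk.cons h₁ (p₁.takeUntil z hz1')).getVert 1 =
              (Walk.cons h (q'.takeUntil z hz2')).getVert 1 := by rw [heq]
          exact hab (by simpa [Walk.getVert_cons_succ] using hgv)
        have hW : ((Walk.cons h₁ p₁).reverse.append (Walk.cons h q')).IsPath :=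
          isPath_append_aux hp.reverse hq key
        have hYU := hd y u ((Walk.cons h₁ p₁).reverse.append (Walk.cons h q')) hW
        rw [Walk.edges_append, List.map_append, List.sum_append,
          ← hd y x (Walk.cons h₁ p₁).reverse hp.reverse,
          ← hd x u (Walk.cons h q') hq] at hYU
        exact ⟨x, Walk.start_mem_support _, by simp, by simp, by rw [hYU]⟩

end Aux

/-- The Vietoris–Rips complex at threshold `t`: nonempty finite subsets of
diameter at most `t`. -/
def VRComplex (X : Type*) [MetricSpace X] (t : ℝ) : Set (Finset X) :=
  {σ | σ.Nonempty ∧ ∀ x ∈ σ, ∀ y ∈ σ, dist x y ≤ t}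

/-- In a finite tree metric space, every edge `e = {x,y}` with `diam e = r` is
contained in a unique maximal simplex `Δ_e` of `VR_r(V)`, namely the simplex spanned
by `B(x,r) ∩ B(y,r)`. If `e` is a tree edge of length `r` then `Δ_e = e`; if `e` is
not a tree edge then `e` is a proper face of `Δ_e`. -/
theorem stmt12 (V : Type*) [MetricSpace V] [Fintype V] [DecidableEq V]
    (G : SimpleGraph V) (l : Sym2 V → ℝ) (hT : G.IsTree)
    (hl : ∀ e ∈ G.edgeSet, 0 < l e)
    (hd : ∀ (x y : V) (p : G.Walk x y), p.IsPath → dist x y = (p.edges.map l).sum)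
    (x y : V) (hxy : x ≠ y) (r : ℝ) (hr : dist x y = r) :
    ∃ Δ : Finset V, Δ ∈ VRComplex V r ∧ {x, y} ⊆ Δ ∧
      (∀ σ ∈ VRComplex V r, {x, y} ⊆ σ → σ ⊆ Δ) ∧
      (↑Δ : Set V) = {v | dist x v ≤ r ∧ dist y v ≤ r} ∧
      (G.Adj x y → Δ = {x, y}) ∧ (¬G.Adj x y → {x, y} ⊂ Δ) := by
  classical
  have hr0 : 0 < r := hr ▸ dist_pos.mpr hxy
  have hyx : dist y x = r := by rw [_root_.dist_comm]; exact hr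
  obtain ⟨P, hP, hPu⟩ := hT.existsUnique_path x y
  have med : ∀ u : V, ∃ m ∈ P.support, dist x y = dist x m + dist m y ∧
      dist x u = dist x m + dist m u ∧ dist y u = dist y m + dist m u := by
    intro u
    obtain ⟨Q, hQ, -⟩ := hT.existsUnique_path x u
    exact median hT hd Q hQ P hP
  set Δ : Finset V := Finset.univ.filter (fun v => dist x v ≤ r ∧ dist y v ≤ r) with hΔ
  have hmem : ∀ v, v ∈ Δ ↔ dist x v ≤ r ∧ dist y v ≤ r := by
    intro v; simp [hΔ]
  have hxΔ : x ∈ Δ := (hmem x).mpr ⟨by simp [hr0.le], hyx.le⟩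
  have hyΔ : y ∈ Δ := (hmem y).mpr ⟨hr.le, by simp [hr0.le]⟩
  have hsub : ({x, y} : Finset V) ⊆ Δ := by
    intro z hz
    rcases Finset.mem_insert.mp hz with h | h
    · exact h ▸ hxΔ
    · exact (Finset.mem_singleton.mp h) ▸ hyΔ
  have diam : ∀ u ∈ Δ, ∀ v ∈ Δ, dist u v ≤ r := by
    intro u hu v hv
    obtain ⟨hu1, hu2⟩ := (hmem u).mp hu
    obtain ⟨hv1, hv2⟩ := (hmem v).mp hv
    obtain ⟨m₁, hm₁, E1, E2, E3⟩ := med u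
    obtain ⟨m₂, hm₂, F1, F2, F3⟩ := med v
    have cm1 : dist y m₁ = dist m₁ y := _root_.dist_comm y m₁
    have cm2 : dist y m₂ = dist m₂ y := _root_.dist_comm y m₂
    have hu3 : dist m₁ u ≤ dist m₁ y := by linarith
    have hu4 : dist m₁ u ≤ dist x m₁ := by linarith
    have hv3 : dist m₂ v ≤ dist m₂ y := by linarith
    have hv4 : dist m₂ v ≤ dist x m₂ := by linarith
    have hsplit : m₂ ∈ (P.takeUntil m₁ hm₁).support ∨ m₂ ∈ (P.dropUntil m₁ hm₁).support := by
      have hts := P.take_spec hm₁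
      rw [← hts, Walk.mem_support_append_iff] at hm₂
      exact hm₂
    have tri : dist u v ≤ dist m₁ u + dist m₁ m₂ + dist m₂ v := by
      have t1 := dist_triangle u m₁ v
      have t2 := dist_triangle m₁ m₂ v
      have t3 := _root_.dist_comm u m₁
      linarith
    rcases hsplit with hcase | hcase
    · have hseg : dist x m₁ = dist x m₂ + dist m₂ m₁ :=
        dist_split hd (P.takeUntil m₁ hm₁) (hP.takeUntil hm₁) hcase
      have c12 := _root_.dist_comm m₁ m₂
      linarith
    · have hseg : dist m₁ y = dist m₁ m₂ + dist m₂ y :=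
        dist_split hd (P.dropUntil m₁ hm₁) (hP.dropUntil hm₁) hcase
      linarith
  refine ⟨Δ, ⟨⟨x, hxΔ⟩, diam⟩, hsub, ?_, ?_, ?_, ?_⟩
  · intro σ hσ hσsub v hv
    obtain ⟨-, hσd⟩ := hσ
    exact (hmem v).mpr ⟨hσd x (hσsub (by simp)) v hv, hσd y (hσsub (by simp)) v hv⟩
  · ext v
    simp only [Finset.coe_filter, Finset.mem_univ, true_and, hΔ, Set.mem_setOf_eq]
  · intro hadj
    have hPedge : P = Walk.cons hadj Walk.nil := by
      exact (hPu _ (Walk.IsPath.nil.cons (by simp [hxy]))).symm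
    apply Finset.Subset.antisymm _ hsub
    intro v hv
    obtain ⟨hv1, hv2⟩ := (hmem v).mp hv
    obtain ⟨m, hm, E1, E2, E3⟩ := med v
    rw [hPedge] at hm
    simp only [Walk.support_cons, Walk.support_nil, List.mem_cons, List.mem_singleton,
      List.not_mem_nil, or_false] at hm
    rcases hm with h1 | h1
    · rw [h1] at E3
      have hxv : dist x v ≤ 0 := by linarith
      have hvx : v = x := (dist_le_zero.mp hxv).symm
      rw [hvx]; exact Finset.mem_insert_self _ _
    · rw [h1] at E2
      have hyv : dist y v ≤ 0 := by linarith
      have hvy : v = y := (dist_le_zero.mp hyv).symm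
      rw [hvy]; simp
  · intro hnadj
    refine (Finset.ssubset_iff_of_subset hsub).mpr ?_
    cases P with
    | nil => exact absurd rfl hxy
    | @cons _ a _ h₁ p₁ =>
      have hax : a ≠ x := (G.ne_of_adj h₁).symm
      have hay : a ≠ y := fun h => hnadj (h ▸ h₁)
      have hsplit : dist x y = dist x a + dist a y :=
        dist_split hd (Walk.cons h₁ p₁) hP (by simp)
      have d1 : dist x a ≤ r := by
        have := dist_nonneg (x := a) (y := y); linarith
      have d2 : dist y a ≤ r := by
        have := dist_nonneg (x := x) (y := a)
        have := _root_.dist_comm a y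
        linarith
      exact ⟨a, (hmem a).mpr ⟨d1, d2⟩, by simp [hax, hay]⟩
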